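/- There do not exist integers x and y such that the lens space L(2x(1-4y)+6y-1, x(1-4y)+y) is homeomorphic to L(111, 68). Equivalently, for all integers x, y, setting p = 2x(1-4y)+6y-1 and q = x(1-4y)+y, it is not the case that |p| = 111 and (q ≡ ±68 mod 111 or 68·q ≡ ±1 mod 111). -/
import Mathlib


theorem stmt9 (x y : ℤ) :
    ¬(|2 * x * (1 - 4 * y) + 6 * y - 1| = 111 ∧
      ((x * (1 - 4 * y) + y ≡ 68 [ZMOD 111] ∨ x * (1 - 4 * y) + y ≡ -68 [ZMOD 111]) ∨
        (68 * (x * (1 - 4 * y) + y) ≡ 1 [ZMOD 111] ∨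
          68 * (x * (1 - 4 * y) + y) ≡ -1 [ZMOD 111]))) := by
  rintro ⟨habs, hq⟩
  simp only [Int.ModEq] at hq
  rcases (abs_eq (by norm_num : (0:ℤ) ≤ 111)).mp habs with h | h
  · have hd : (1 - 4*y) ∣ 221 := ⟨4*x - 3, by linear_combination -2*h⟩
    obtain ⟨k, hk⟩ := hd
    have hb1 : (1:ℤ) - 4*y ≤ 221 := Int.le_of_dvd (by norm_num) ⟨k, hk⟩
    have hb2 : -(1 - 4*y) ≤ 221 := Int.le_of_dvd (by norm_num) ((neg_dvd).mpr ⟨k, hk⟩)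
    have hy1 : -55 ≤ y := by omega
    have hy2 : y ≤ 55 := by omega
    interval_cases y <;> omega
  · have hd : (1 - 4*y) ∣ 223 := ⟨3 - 4*x, by linear_combination 2*h⟩
    obtain ⟨k, hk⟩ := hd
    have hb1 : (1:ℤ) - 4*y ≤ 223 := Int.le_of_dvd (by norm_num) ⟨k, hk⟩
    have hb2 : -(1 - 4*y) ≤ 223 := Int.le_of_dvd (by norm_num) ((neg_dvd).mpr ⟨k, hk⟩)
    have hy1 : -55 ≤ y := by omega
    have hy2 : y ≤ 56 := by omega
    interval_cases y <;> omega
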